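/- If E ⊆ ℝ is a measurable set that is 2π-translation congruent to [0, 2π), then the functions (2π)^{-1/2} e^{iℓs} restricted to E, ℓ ∈ ℤ, form an orthonormal basis of L²(E). -/

import Mathlib

open MeasureTheory

/-- `P` is a measurable partition (modulo null sets) of `E`, indexed by `ℤ`. -/
def IsMeasPartitionZ (P : ℤ → Set ℝ) (E : Set ℝ) : Prop :=
  (∀ n, MeasurableSet (P n)) ∧ (∀ m n : ℤ, m ≠ n → volume (P m ∩ P n) = 0) ∧
    volume (symmDiff (⋃ n, P n) E) = 0

/-- `E` and `F` are translation congruent modulo 2π. -/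
def TransCongr2pi (E F : Set ℝ) : Prop :=
  ∃ P : ℤ → Set ℝ, IsMeasPartitionZ P E ∧
    IsMeasPartitionZ (fun n => (fun x => x + 2 * Real.pi * n) '' P n) F

namespace ExpBasisAux

open Set

noncomputable section

instance fact_two_pi_pos : Fact (0 < 2 * Real.pi) := ⟨Real.two_pi_pos⟩

/-- Translation by an integer multiple of `2π` descends to the identity on `AddCircle (2π)`. -/
theorem mk_add_int (x : ℝ) (n : ℤ) :
    ((x + 2 * Real.pi * n : ℝ) : AddCircle (2 * Real.pi)) = (x : AddCircle (2 * Real.pi)) := by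
  rw [QuotientAddGroup.eq_iff_sub_mem]
  refine AddSubgroup.mem_zmultiples_iff.mpr ⟨n, ?_⟩
  rw [zsmul_eq_mul]; ring

theorem vol_image_add (c : ℝ) (B : Set ℝ) : volume ((fun x => x + c) '' B) = volume B := by
  have h : (fun x => x + c) '' B = (fun x : ℝ => x + -c) ⁻¹' B := by
    ext y
    constructor
    · rintro ⟨x, hx, rfl⟩; simpa using hx
    · intro hy; exact ⟨y + -c, hy, by ring⟩
  rw [h, measure_preimage_add_right]

theorem measure_inter_sum {P : ℤ → Set ℝ} {E : Set ℝ}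
    (hPm : ∀ n, MeasurableSet (P n))
    (hPd : ∀ m n : ℤ, m ≠ n → volume (P m ∩ P n) = 0)
    (hPu : volume (symmDiff (⋃ n, P n) E) = 0)
    {A : Set ℝ} (hA : MeasurableSet A) :
    volume (E ∩ A) = ∑' n : ℤ, volume (P n ∩ A) := by
  have hEeq : (⋃ n, P n : Set ℝ) =ᵐ[volume] E := measure_symmDiff_eq_zero_iff.mp hPu
  have h1 : volume (E ∩ A) = volume ((⋃ n, P n) ∩ A) :=
    measure_congr (ae_eq_set_inter hEeq.symm (ae_eq_refl A))
  rw [h1, iUnion_inter]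
  exact measure_iUnion₀
    (fun m n hmn => measure_mono_null
      (Set.inter_subset_inter Set.inter_subset_left Set.inter_subset_left) (hPd m n hmn))
    (fun n => ((hPm n).inter hA).nullMeasurableSet)

theorem measure_inter_congr {P : ℤ → Set ℝ} {E F : Set ℝ}
    (hP : IsMeasPartitionZ P E)
    (hQ : IsMeasPartitionZ (fun n => (fun x => x + 2 * Real.pi * n) '' P n) F)
    {A : Set ℝ} (hA : MeasurableSet A)
    (hinv : ∀ (x : ℝ) (n : ℤ), x + 2 * Real.pi * (n : ℝ) ∈ A ↔ x ∈ A) :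
    volume (E ∩ A) = volume (F ∩ A) := by
  obtain ⟨hPm, hPd, hPu⟩ := hP
  obtain ⟨hQm, hQd, hQu⟩ := hQ
  rw [measure_inter_sum hPm hPd hPu hA, measure_inter_sum hQm hQd hQu hA]
  refine tsum_congr fun n => ?_
  have himgA : (fun x : ℝ => x + 2 * Real.pi * n) '' A = A := by
    ext y
    constructor
    · rintro ⟨x, hx, rfl⟩; exact (hinv x n).mpr hx
    · intro hy
      refine ⟨y - 2 * Real.pi * n, ?_, by ring⟩
      have h := hinv (y - 2 * Real.pi * n) n
      rw [sub_add_cancel] at h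
      exact h.mp hy
  calc volume (P n ∩ A)
      = volume ((fun x : ℝ => x + 2 * Real.pi * n) '' (P n ∩ A)) := (vol_image_add _ _).symm
    _ = volume (((fun x : ℝ => x + 2 * Real.pi * n) '' P n) ∩ A) := by
        rw [Set.image_inter (add_left_injective _), himgA]

/-- The quotient map `ℝ → AddCircle (2π)` is measure preserving from `volume.restrict E`. -/
theorem measurePreserving_mk2 {P : ℤ → Set ℝ} {E : Set ℝ} (hE : MeasurableSet E)
    (hP : IsMeasPartitionZ P E)
    (hQ : IsMeasPartitionZ (fun n => (fun x => x + 2 * Real.pi * n) '' P n)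
      (Set.Ico 0 (2 * Real.pi))) :
    MeasurePreserving (fun x : ℝ => (x : AddCircle (2 * Real.pi)))
      (volume.restrict E) volume := by
  have hmeas : Measurable (fun x : ℝ => (x : AddCircle (2 * Real.pi))) :=
    AddCircle.measurable_mk'
  refine ⟨hmeas, ?_⟩
  ext S hS
  rw [Measure.map_apply hmeas hS, Measure.restrict_apply' hE, Set.inter_comm]
  have hA : MeasurableSet ((fun x : ℝ => (x : AddCircle (2 * Real.pi))) ⁻¹' S) := hmeas hS
  have hinv : ∀ (x : ℝ) (n : ℤ),
      x + 2 * Real.pi * (n : ℝ) ∈ ((fun x : ℝ => (x : AddCircle (2 * Real.pi))) ⁻¹' S)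
        ↔ x ∈ ((fun x : ℝ => (x : AddCircle (2 * Real.pi))) ⁻¹' S) := by
    intro x n
    simp only [Set.mem_preimage, mk_add_int]
  rw [measure_inter_congr hP hQ hA hinv]
  have h2 := (AddCircle.measurePreserving_mk (2 * Real.pi) 0).map_eq
  conv_rhs => rw [← h2]
  rw [Measure.map_apply hmeas hS, Measure.restrict_apply' measurableSet_Ioc, zero_add,
    Set.inter_comm]
  exact measure_congr (ae_eq_set_inter (ae_eq_refl _) Ico_ae_eq_Ioc)

/-! ### The inverse map -/

variable (Q : ℤ → Set ℝ)

/-- Disjointification of the family `Q`. -/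
def QS (n : ℤ) : Set ℝ :=
  Q n \ ⋃ (m : ℤ) (_ : Encodable.encode m < Encodable.encode n), Q m

theorem QS_subset (n : ℤ) : QS Q n ⊆ Q n := Set.diff_subset

theorem QS_disjoint {m n : ℤ} (h : m ≠ n) : QS Q m ∩ QS Q n = ∅ := by
  ext x
  simp only [Set.mem_inter_iff, Set.mem_empty_iff_false, iff_false, not_and]
  intro hm hn
  have hne : Encodable.encode m ≠ Encodable.encode n :=
    fun he => h (Encodable.encode_injective he)
  rcases hne.lt_or_gt with hlt | hlt
  · exact hn.2 (Set.mem_iUnion₂.mpr ⟨m, hlt, hm.1⟩)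
  · exact hm.2 (Set.mem_iUnion₂.mpr ⟨n, hlt, hn.1⟩)

theorem QS_measurable (hQm : ∀ n, MeasurableSet (Q n)) (n : ℤ) :
    MeasurableSet (QS Q n) :=
  (hQm n).diff (MeasurableSet.iUnion fun m => MeasurableSet.iUnion fun _ => hQm m)

theorem Q_diff_QS_null (hQd : ∀ m n : ℤ, m ≠ n → volume (Q m ∩ Q n) = 0) (n : ℤ) :
    volume (Q n \ QS Q n) = 0 := by
  have hsub : Q n \ QS Q n ⊆
      ⋃ (m : ℤ) (_ : Encodable.encode m < Encodable.encode n), Q n ∩ Q m := by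
    rintro x ⟨hx, hx'⟩
    have : x ∈ ⋃ (m : ℤ) (_ : Encodable.encode m < Encodable.encode n), Q m := by
      by_contra hc
      exact hx' ⟨hx, hc⟩
    rcases Set.mem_iUnion₂.mp this with ⟨m, hm, hmx⟩
    exact Set.mem_iUnion₂.mpr ⟨m, hm, hx, hmx⟩
  refine measure_mono_null hsub ?_
  refine measure_iUnion_null fun m => measure_iUnion_null fun hm => ?_
  exact hQd n m (by rintro rfl; exact lt_irrefl _ hm)

open scoped Classical in
/-- The index function: `Nf Q r = n` whenever `r ∈ QS Q n`. -/
def Nf (r : ℝ) : ℤ := if h : ∃ n, r ∈ QS Q n then h.choose else 0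

theorem Nf_eq {n : ℤ} {r : ℝ} (hr : r ∈ QS Q n) : Nf Q r = n := by
  have h : ∃ k, r ∈ QS Q k := ⟨n, hr⟩
  rw [Nf, dif_pos h]
  by_contra hne
  have hd := QS_disjoint Q hne
  have : r ∈ QS Q h.choose ∩ QS Q n := ⟨h.choose_spec, hr⟩
  rw [hd] at this
  exact this

theorem Nf_measurable (hQm : ∀ n, MeasurableSet (Q n)) : Measurable (Nf Q) := by
  apply measurable_to_countable'
  intro n
  by_cases hn : n = 0
  · subst hn
    have hset : Nf Q ⁻¹' {0} = QS Q 0 ∪ (⋃ k, QS Q k)ᶜ := by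
      ext r
      simp only [Set.mem_preimage, Set.mem_singleton_iff, Set.mem_union, Set.mem_compl_iff,
        Set.mem_iUnion]
      constructor
      · intro h
        by_cases hex : ∃ k, r ∈ QS Q k
        · obtain ⟨k, hk⟩ := hex
          have := Nf_eq Q hk
          rw [h] at this
          exact Or.inl (this ▸ hk)
        · exact Or.inr (by simpa using hex)
      · rintro (hq | hq)
        · exact Nf_eq Q hq
        · exact dif_neg (by simpa using hq)
    rw [hset]
    exact (QS_measurable Q hQm 0).union
      (MeasurableSet.compl (MeasurableSet.iUnion fun k => QS_measurable Q hQm k))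
  · have hset : Nf Q ⁻¹' {n} = QS Q n := by
      ext r
      simp only [Set.mem_preimage, Set.mem_singleton_iff]
      constructor
      · intro h
        by_cases hex : ∃ k, r ∈ QS Q k
        · obtain ⟨k, hk⟩ := hex
          have := Nf_eq Q hk
          rw [h] at this
          exact this ▸ hk
        · exact absurd (h ▸ (dif_neg hex : Nf Q r = 0)) hn
      · intro h
        exact Nf_eq Q h
    rw [hset]
    exact QS_measurable Q hQm n

/-- Representative of a point of the circle in `[0, 2π)`. -/
def rep (y : AddCircle (2 * Real.pi)) : ℝ :=
  (AddCircle.equivIco (2 * Real.pi) 0 y : ℝ)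

theorem rep_measurable : Measurable (rep) := by
  have : rep = fun y => ((AddCircle.measurableEquivIco (2 * Real.pi) 0 y : ℝ)) := rfl
  rw [this]
  exact measurable_subtype_coe.comp (AddCircle.measurableEquivIco (2 * Real.pi) 0).measurable

theorem mk_rep (y : AddCircle (2 * Real.pi)) :
    ((rep y : ℝ) : AddCircle (2 * Real.pi)) = y :=
  (AddCircle.equivIco (2 * Real.pi) 0).symm_apply_apply y

theorem rep_mk {r : ℝ} (hr : r ∈ Set.Ico 0 (2 * Real.pi)) :
    rep ((r : ℝ) : AddCircle (2 * Real.pi)) = r := by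
  have h1 : AddCircle.equivIco (2 * Real.pi) 0 ((r : ℝ) : AddCircle (2 * Real.pi))
      = ⟨r, by simpa using hr⟩ := by
    rw [AddCircle.equivIco, QuotientAddGroup.equivIcoMod_coe]
    exact Subtype.ext ((toIcoMod_eq_self _).mpr (by simpa using hr))
  rw [rep, h1]

/-- The measurable inverse of the quotient map, mapping a.e. into `E`. -/
def psi (y : AddCircle (2 * Real.pi)) : ℝ :=
  rep y - 2 * Real.pi * Nf Q (rep y)

/-- The auxiliary map on `ℝ`. -/
def rho (r : ℝ) : ℝ := r - 2 * Real.pi * Nf Q r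

theorem rho_measurable (hQm : ∀ n, MeasurableSet (Q n)) : Measurable (rho Q) := by
  apply Measurable.sub measurable_id
  apply Measurable.mul measurable_const
  exact Measurable.comp (fun s _ => trivial) (Nf_measurable Q hQm)

theorem psi_measurable (hQm : ∀ n, MeasurableSet (Q n)) : Measurable (psi Q) := by
  have : psi Q = (rho Q) ∘ rep := rfl
  rw [this]
  exact (rho_measurable Q hQm).comp rep_measurable

theorem mk_psi (y : AddCircle (2 * Real.pi)) :
    ((psi Q y : ℝ) : AddCircle (2 * Real.pi)) = y := by
  have h2 : ((rep y - 2 * Real.pi * (Nf Q (rep y)) : ℝ) : AddCircle (2 * Real.pi))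
      = ((rep y : ℝ) : AddCircle (2 * Real.pi)) := by
    conv_rhs => rw [show (rep y : ℝ)
      = (rep y - 2 * Real.pi * (Nf Q (rep y))) + 2 * Real.pi * (Nf Q (rep y)) by ring]
    rw [mk_add_int]
  exact h2.trans (mk_rep y)

end

end ExpBasisAux

open ExpBasisAux Set

section Main

variable {P : ℤ → Set ℝ} {E : Set ℝ}

theorem ExpBasisAux.measurePreserving_psi (hE : MeasurableSet E)
    (hP : IsMeasPartitionZ P E)
    (hQ : IsMeasPartitionZ (fun n => (fun x => x + 2 * Real.pi * n) '' P n)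
      (Set.Ico 0 (2 * Real.pi))) :
    MeasurePreserving (psi (fun n => (fun x => x + 2 * Real.pi * n) '' P n))
      volume (volume.restrict E) := by
  set Q : ℤ → Set ℝ := fun n => (fun x => x + 2 * Real.pi * n) '' P n with hQdef
  obtain ⟨hPm, hPd, hPu⟩ := hP
  obtain ⟨hQm, hQd, hQu⟩ := hQ
  refine ⟨psi_measurable Q hQm, ?_⟩
  ext A hA
  rw [Measure.map_apply (psi_measurable Q hQm) hA, Measure.restrict_apply' hE]
  -- step 1 : express the circle measure via the interval
  have h2 := (AddCircle.measurePreserving_mk (2 * Real.pi) 0).map_eq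
  have hpsiA : MeasurableSet (psi Q ⁻¹' A) := psi_measurable Q hQm hA
  rw [← h2, Measure.map_apply AddCircle.measurable_mk' hpsiA,
    Measure.restrict_apply' measurableSet_Ioc, zero_add]
  have hIcoIoc : volume ((fun x : ℝ => (x : AddCircle (2 * Real.pi))) ⁻¹' (psi Q ⁻¹' A)
        ∩ Ioc 0 (2 * Real.pi))
      = volume ((fun x : ℝ => (x : AddCircle (2 * Real.pi))) ⁻¹' (psi Q ⁻¹' A)
        ∩ Ico 0 (2 * Real.pi)) :=
    measure_congr (ae_eq_set_inter (ae_eq_refl _) Ico_ae_eq_Ioc.symm)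
  rw [hIcoIoc]
  -- step 2 : on Ico, the composition is rho
  have hsetIco : (fun x : ℝ => (x : AddCircle (2 * Real.pi))) ⁻¹' (psi Q ⁻¹' A)
      ∩ Ico 0 (2 * Real.pi) = rho Q ⁻¹' A ∩ Ico 0 (2 * Real.pi) := by
    ext r
    simp only [Set.mem_inter_iff, Set.mem_preimage, and_congr_left_iff]
    intro hr
    have : psi Q ((r : ℝ) : AddCircle (2 * Real.pi)) = rho Q r := by
      rw [psi, rho, rep_mk hr]
    rw [this]
  rw [hsetIco]
  -- step 3 : Ico ∼ ⋃ Q ∼ ⋃ QS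
  have hQU : (Ico 0 (2 * Real.pi) : Set ℝ) =ᵐ[volume] ⋃ n, QS Q n := by
    rw [← measure_symmDiff_eq_zero_iff]
    refine le_antisymm ?_ zero_le
    have hnull1 : volume (symmDiff (Ico 0 (2 * Real.pi) : Set ℝ) (⋃ n, Q n)) = 0 := by
      rw [symmDiff_comm]; exact hQu
    have hnull2 : volume (symmDiff (⋃ n, Q n) (⋃ n, QS Q n)) = 0 := by
      have hsub : symmDiff (⋃ n, Q n) (⋃ n, QS Q n) ⊆ ⋃ n, (Q n \ QS Q n) := by
        rintro x hx
        rcases hx with hx | hx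
        · rcases Set.mem_iUnion.mp hx.1 with ⟨n, hn⟩
          refine Set.mem_iUnion.mpr ⟨n, hn, fun hc => hx.2 (Set.mem_iUnion.mpr ⟨n, hc⟩)⟩
        · exact absurd (Set.mem_iUnion.mpr
            ⟨(Set.mem_iUnion.mp hx.1).choose,
              QS_subset Q _ (Set.mem_iUnion.mp hx.1).choose_spec⟩) hx.2
      exact measure_mono_null hsub (measure_iUnion_null fun n => Q_diff_QS_null Q hQd n)
    calc volume (symmDiff (Ico 0 (2 * Real.pi) : Set ℝ) (⋃ n, QS Q n))
        ≤ volume (symmDiff (Ico 0 (2 * Real.pi) : Set ℝ) (⋃ n, Q n))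
          + volume (symmDiff (⋃ n, Q n) (⋃ n, QS Q n)) := by
          refine le_trans (measure_mono (symmDiff_triangle _ _ _)) (measure_union_le _ _)
      _ = 0 := by rw [hnull1, hnull2, add_zero]
  have h3 : volume (rho Q ⁻¹' A ∩ Ico 0 (2 * Real.pi))
      = volume (rho Q ⁻¹' A ∩ ⋃ n, QS Q n) :=
    measure_congr (ae_eq_set_inter (ae_eq_refl _) hQU)
  rw [h3, Set.inter_iUnion]
  rw [measure_iUnion₀ (fun m n hmn =>
      measure_mono_null
        (Set.inter_subset_inter Set.inter_subset_right Set.inter_subset_right)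
        (by rw [QS_disjoint Q hmn]; exact measure_empty))
    (fun n => (((rho_measurable Q hQm) hA).inter (QS_measurable Q hQm n)).nullMeasurableSet)]
  -- step 4 : each term
  have hterm : ∀ n : ℤ, volume (rho Q ⁻¹' A ∩ QS Q n) = volume (P n ∩ A) := by
    intro n
    have hset1 : rho Q ⁻¹' A ∩ QS Q n
        = ((fun r : ℝ => r + -(2 * Real.pi * n)) ⁻¹' A) ∩ QS Q n := by
      ext r
      simp only [Set.mem_inter_iff, Set.mem_preimage, and_congr_left_iff]
      intro hr
      rw [rho, Nf_eq Q hr, sub_eq_add_neg]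
    have hset2 : volume (((fun r : ℝ => r + -(2 * Real.pi * n)) ⁻¹' A) ∩ QS Q n)
        = volume (((fun r : ℝ => r + -(2 * Real.pi * n)) ⁻¹' A) ∩ Q n) := by
      refine measure_congr (ae_eq_set_inter (ae_eq_refl _) ?_)
      rw [← measure_symmDiff_eq_zero_iff]
      refine measure_mono_null ?_ (Q_diff_QS_null Q hQd n)
      intro x hx
      rcases hx with hx | hx
      · exact absurd (QS_subset Q n hx.1) hx.2
      · exact ⟨hx.1, hx.2⟩
    have hset3 : ((fun r : ℝ => r + -(2 * Real.pi * n)) ⁻¹' A) ∩ Q n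
        = (fun r : ℝ => r + -(2 * Real.pi * n)) ⁻¹' (A ∩ P n) := by
      ext y
      simp only [Set.mem_inter_iff, Set.mem_preimage, hQdef]
      constructor
      · rintro ⟨hy, x, hx, rfl⟩
        refine ⟨hy, ?_⟩
        have : x + 2 * Real.pi * n + -(2 * Real.pi * n) = x := by ring
        rwa [this]
      · rintro ⟨hy, hy'⟩
        exact ⟨hy, y + -(2 * Real.pi * n), hy', by ring⟩
    rw [hset1, hset2, hset3, measure_preimage_add_right, Set.inter_comm]
  calc (∑' n : ℤ, volume (rho Q ⁻¹' A ∩ QS Q n)) = ∑' n : ℤ, volume (P n ∩ A) :=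
        tsum_congr hterm
    _ = volume (E ∩ A) := (measure_inter_sum hPm hPd hPu hA).symm
    _ = volume (A ∩ E) := by rw [Set.inter_comm]

theorem ExpBasisAux.psi_mk_ae (hE : MeasurableSet E)
    (hP : IsMeasPartitionZ P E)
    (hQ : IsMeasPartitionZ (fun n => (fun x => x + 2 * Real.pi * n) '' P n)
      (Set.Ico 0 (2 * Real.pi))) :
    (fun x : ℝ => psi (fun n => (fun x => x + 2 * Real.pi * n) '' P n)
      ((x : AddCircle (2 * Real.pi)))) =ᵐ[volume.restrict E] id := by
  set Q : ℤ → Set ℝ := fun n => (fun x => x + 2 * Real.pi * n) '' P n with hQdef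
  obtain ⟨hPm, hPd, hPu⟩ := hP
  obtain ⟨hQm, hQd, hQu⟩ := hQ
  rw [Filter.EventuallyEq, ae_iff]
  rw [Measure.restrict_apply' hE]
  set G : ℤ → Set ℝ := fun n =>
    {x : ℝ | x + 2 * Real.pi * n ∈ QS Q n ∩ Ico 0 (2 * Real.pi)} with hGdef
  have hgood : ∀ (n : ℤ) (x : ℝ), x ∈ P n → x ∈ G n →
      psi Q ((x : AddCircle (2 * Real.pi))) = x := by
    intro n x _ hg
    have hmk : ((x : ℝ) : AddCircle (2 * Real.pi))
        = ((x + 2 * Real.pi * n : ℝ) : AddCircle (2 * Real.pi)) := (mk_add_int x n).symm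
    rw [psi, hmk, rep_mk hg.2, Nf_eq Q hg.1]
    ring
  have hsub : {x : ℝ | ¬ psi Q ((x : AddCircle (2 * Real.pi))) = id x} ∩ E
      ⊆ (E \ ⋃ n, P n) ∪ ⋃ n, (P n \ G n) := by
    rintro x ⟨hxbad, hxE⟩
    by_cases hxU : x ∈ ⋃ n, P n
    · rcases Set.mem_iUnion.mp hxU with ⟨n, hn⟩
      by_cases hg : x ∈ G n
      · exact absurd (hgood n x hn hg) hxbad
      · exact Or.inr (Set.mem_iUnion.mpr ⟨n, hn, hg⟩)
    · exact Or.inl ⟨hxE, hxU⟩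
  refine measure_mono_null hsub ?_
  refine measure_union_null ?_ (measure_iUnion_null fun n => ?_)
  · refine measure_mono_null ?_ hPu
    intro x hx
    exact Or.inr ⟨hx.1, hx.2⟩
  · have hsub2 : P n \ G n
        ⊆ (fun x : ℝ => x + 2 * Real.pi * n) ⁻¹'
          (Q n \ (QS Q n ∩ Ico 0 (2 * Real.pi))) := by
      rintro x ⟨hx, hxg⟩
      refine ⟨⟨x, hx, rfl⟩, ?_⟩
      simpa [hGdef] using hxg
    refine measure_mono_null hsub2 ?_
    rw [measure_preimage_add_right]
    have hsub3 : Q n \ (QS Q n ∩ Ico 0 (2 * Real.pi))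
        ⊆ (Q n \ QS Q n) ∪ (Q n \ Ico 0 (2 * Real.pi)) := by
      rintro y ⟨hy, hy'⟩
      by_cases h1 : y ∈ QS Q n
      · exact Or.inr ⟨hy, fun hc => hy' ⟨h1, hc⟩⟩
      · exact Or.inl ⟨hy, h1⟩
    refine measure_mono_null hsub3 (measure_union_null (Q_diff_QS_null Q hQd n) ?_)
    refine measure_mono_null ?_ hQu
    intro y hy
    exact Or.inl ⟨Set.mem_iUnion.mpr ⟨n, hy.1⟩, hy.2⟩

end Main

set_option maxHeartbeats 2000000 in
/-- If E is 2π-translation congruent to [0, 2π), then the functions (2π)^{-1/2} e^{iℓs}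
restricted to E, ℓ ∈ ℤ, form an orthonormal (Hilbert) basis of L²(E). -/
theorem exponentials_orthonormal_basis_of_congruent (E : Set ℝ) (hE : MeasurableSet E)
    (hcong : TransCongr2pi E (Set.Ico 0 (2 * Real.pi))) :
    ∃ b : HilbertBasis ℤ ℂ (Lp ℂ 2 (volume.restrict E)),
      ∀ ℓ : ℤ, (b ℓ : ℝ → ℂ) =ᵐ[volume.restrict E]
        fun s : ℝ => (Real.sqrt (2 * Real.pi) : ℂ)⁻¹ * Complex.exp (Complex.I * ℓ * s) := by
  obtain ⟨P, hP, hQ⟩ := hcong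
  set Q : ℤ → Set ℝ := fun n => (fun x => x + 2 * Real.pi * n) '' P n with hQdef
  have hmk : MeasurePreserving (fun x : ℝ => (x : AddCircle (2 * Real.pi)))
      (volume.restrict E) volume := measurePreserving_mk2 hE hP hQ
  have hpsi : MeasurePreserving (psi Q) volume (volume.restrict E) :=
    measurePreserving_psi hE hP hQ
  have hpsimk : (fun x : ℝ => psi Q ((x : AddCircle (2 * Real.pi))))
      =ᵐ[volume.restrict E] id := psi_mk_ae hE hP hQ
  haveI : IsFiniteMeasure (volume.restrict E) := by
    constructor
    calc (volume.restrict E) Set.univ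
        = (volume.restrict E) ((fun x : ℝ => (x : AddCircle (2 * Real.pi))) ⁻¹' Set.univ) := by
          simp
      _ = (Measure.map (fun x : ℝ => (x : AddCircle (2 * Real.pi))) (volume.restrict E))
          Set.univ := (Measure.map_apply hmk.measurable MeasurableSet.univ).symm
      _ = volume (Set.univ : Set (AddCircle (2 * Real.pi))) := by rw [hmk.map_eq]
      _ < ⊤ := measure_lt_top _ _
  set c : ℂ := ((Real.sqrt (2 * Real.pi) : ℝ) : ℂ)⁻¹ with hc
  have hcne : c ≠ 0 := by
    refine inv_ne_zero ?_
    exact_mod_cast (Real.sqrt_pos.mpr Real.two_pi_pos).ne'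
  set e : ℤ → ℝ → ℂ := fun ℓ s => c * Complex.exp (Complex.I * ℓ * s) with he
  have hcont : ∀ ℓ, Continuous (e ℓ) := fun ℓ =>
    continuous_const.mul (Complex.continuous_exp.comp
      (continuous_const.mul Complex.continuous_ofReal))
  have hnorm : ∀ ℓ s, ‖e ℓ s‖ = ‖c‖ := by
    intro ℓ s
    rw [he]
    simp only [norm_mul, Complex.norm_exp]
    have : (Complex.I * ℓ * s).re = 0 := by simp
    rw [this, Real.exp_zero, mul_one]
  have hmem : ∀ ℓ : ℤ, MemLp (e ℓ) 2 (volume.restrict E) := fun ℓ =>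
    MemLp.of_bound (hcont ℓ).aestronglyMeasurable ‖c‖
      (Filter.Eventually.of_forall fun x => le_of_eq (hnorm ℓ x))
  set eL : ℤ → Lp ℂ 2 (volume.restrict E) := fun ℓ => (hmem ℓ).toLp (e ℓ) with heL
  -- the key integral computation
  have hint : ∀ k : ℤ, (∫ x : ℝ, Complex.exp (Complex.I * k * x) ∂(volume.restrict E))
      = if k = 0 then ((2 * Real.pi : ℝ) : ℂ) else 0 := by
    intro k
    have hfc : ∀ x : ℝ, fourier (T := 2 * Real.pi) k ((x : ℝ) : AddCircle (2 * Real.pi))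
        = Complex.exp (Complex.I * k * x) := by
      intro x
      rw [fourier_coe_apply]
      congr 1
      have hpi : ((2 * Real.pi : ℝ) : ℂ) ≠ 0 := by
        exact_mod_cast Real.two_pi_pos.ne'
      rw [div_eq_iff hpi]
      push_cast
      ring
    have h1 : (∫ x : ℝ, Complex.exp (Complex.I * k * x) ∂(volume.restrict E))
        = ∫ y : AddCircle (2 * Real.pi), fourier k y ∂volume := by
      rw [← hmk.map_eq, integral_map hmk.measurable.aemeasurable
        ((map_continuous (fourier k)).aestronglyMeasurable)]
      exact integral_congr_ae (Filter.Eventually.of_forall fun x => (hfc x).symm)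
    rw [h1, ← AddCircle.integral_preimage (2 * Real.pi) 0
      (fun y : AddCircle (2 * Real.pi) => fourier k y)]
    rw [zero_add, ← intervalIntegral.integral_of_le Real.two_pi_pos.le]
    have h2 : (∫ x in (0:ℝ)..(2 * Real.pi),
        fourier (T := 2 * Real.pi) k ((x : ℝ) : AddCircle (2 * Real.pi)))
        = ∫ x in (0:ℝ)..(2 * Real.pi), Complex.exp ((Complex.I * k) * x) := by
      refine intervalIntegral.integral_congr fun x _ => ?_
      rw [hfc x]
    rw [h2]
    by_cases hk : k = 0
    · subst hk
      simp only [Int.cast_zero, mul_zero, zero_mul, Complex.exp_zero]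
      rw [intervalIntegral.integral_const]
      simp [Complex.real_smul]
    · have hkc : (Complex.I * k) ≠ 0 := by
        refine mul_ne_zero Complex.I_ne_zero ?_
        exact_mod_cast hk
      rw [integral_exp_mul_complex hkc]
      have hexp : Complex.exp (Complex.I * k * ((2 * Real.pi : ℝ) : ℂ)) = 1 := by
        have := Complex.exp_int_mul_two_pi_mul_I k
        rw [← this]
        congr 1
        push_cast
        ring
      rw [if_neg hk, hexp]
      simp
  -- inner products
  have hinner : ∀ ℓ m : ℤ, (inner ℂ (eL ℓ) (eL m) : ℂ) = if ℓ = m then 1 else 0 := by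
    intro ℓ m
    rw [MeasureTheory.L2.inner_def]
    have hae : ∀ᵐ x ∂(volume.restrict E),
        (inner ℂ ((eL ℓ : ℝ → ℂ) x) ((eL m : ℝ → ℂ) x) : ℂ)
          = (((2 * Real.pi : ℝ) : ℂ))⁻¹ * Complex.exp (Complex.I * (m - ℓ : ℤ) * x) := by
      filter_upwards [(hmem ℓ).coeFn_toLp, (hmem m).coeFn_toLp] with x h1 h2
      rw [h1, h2, RCLike.inner_apply', he]
      have hconjc : (starRingEnd ℂ) c = c := by
        rw [hc, map_inv₀, Complex.conj_ofReal]
      have hconjexp : (starRingEnd ℂ) (Complex.exp (Complex.I * ℓ * x))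
          = Complex.exp (-(Complex.I * ℓ * x)) := by
        rw [← Complex.exp_conj]
        congr 1
        rw [map_mul, map_mul, Complex.conj_I, Complex.conj_ofReal, map_intCast]
        ring
      have hcc : c * c = (((2 * Real.pi : ℝ) : ℂ))⁻¹ := by
        rw [hc, ← mul_inv, ← Complex.ofReal_mul, Real.mul_self_sqrt Real.two_pi_pos.le]
      have hee : Complex.exp (-(Complex.I * ℓ * x)) * Complex.exp (Complex.I * m * x)
          = Complex.exp (Complex.I * ((m - ℓ : ℤ) : ℂ) * x) := by
        rw [← Complex.exp_add]
        congr 1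
        push_cast
        ring
      calc (starRingEnd ℂ) (c * Complex.exp (Complex.I * ℓ * x)) * (c * Complex.exp (Complex.I * m * x))
          = ((starRingEnd ℂ) c * c) * ((starRingEnd ℂ) (Complex.exp (Complex.I * ℓ * x))
              * Complex.exp (Complex.I * m * x)) := by rw [map_mul]; ring
        _ = (((2 * Real.pi : ℝ) : ℂ))⁻¹ * Complex.exp (Complex.I * ((m - ℓ : ℤ) : ℂ) * x) := by
            rw [hconjc, hconjexp, hee, hcc]
    rw [integral_congr_ae hae, integral_const_mul, hint (m - ℓ)]
    by_cases h : ℓ = m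
    · subst h
      have h2 : ((2 * Real.pi : ℝ) : ℂ) ≠ 0 := by exact_mod_cast Real.two_pi_pos.ne'
      have hπ : (Real.pi : ℂ) ≠ 0 := by exact_mod_cast Real.pi_pos.ne'
      simp [inv_mul_cancel₀ h2]
      field_simp
    · rw [if_neg (fun hc => h (by omega)), if_neg h, mul_zero]
  have horth : Orthonormal ℂ eL := by
    rw [orthonormal_iff_ite]
    exact hinner
  -- completeness
  have hcomp : ⊤ ≤ (Submodule.span ℂ (Set.range eL)).topologicalClosure := by
    refine le_of_eq ?_
    symm
    rw [Submodule.topologicalClosure_eq_top_iff]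
    rw [Submodule.eq_bot_iff]
    intro f hf
    have hforth : ∀ ℓ : ℤ, (inner ℂ (eL ℓ) f : ℂ) = 0 := fun ℓ =>
      (Submodule.mem_orthogonal _ f).mp hf (eL ℓ) (Submodule.subset_span ⟨ℓ, rfl⟩)
    have hfi : ∀ i : ℤ, (∫ x : ℝ, Complex.exp (Complex.I * (-i : ℤ) * x) * (f : ℝ → ℂ) x
        ∂(volume.restrict E)) = 0 := by
      intro i
      have h0 := hforth i
      rw [MeasureTheory.L2.inner_def] at h0
      have hae : ∀ᵐ x ∂(volume.restrict E),
          (inner ℂ ((eL i : ℝ → ℂ) x) ((f : ℝ → ℂ) x) : ℂ)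
            = c * (Complex.exp (Complex.I * (-i : ℤ) * x) * (f : ℝ → ℂ) x) := by
        filter_upwards [(hmem i).coeFn_toLp] with x h1
        rw [h1, RCLike.inner_apply', he]
        have hconjc : (starRingEnd ℂ) c = c := by
          rw [hc, map_inv₀, Complex.conj_ofReal]
        have hconjexp : (starRingEnd ℂ) (Complex.exp (Complex.I * i * x))
            = Complex.exp (Complex.I * ((-i : ℤ) : ℂ) * x) := by
          rw [← Complex.exp_conj]
          congr 1
          rw [map_mul, map_mul, Complex.conj_I, Complex.conj_ofReal, map_intCast]
          push_cast
          ring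
        rw [map_mul, hconjc, hconjexp]
        ring
      rw [integral_congr_ae hae, integral_const_mul] at h0
      rcases mul_eq_zero.mp h0 with h | h
      · exact absurd h hcne
      · exact h
    -- transfer to the circle
    set g : AddCircle (2 * Real.pi) → ℂ := (f : ℝ → ℂ) ∘ psi Q with hg
    have hgmem2 : MemLp g 2 (volume : Measure (AddCircle (2 * Real.pi))) :=
      (Lp.memLp f).comp_measurePreserving hpsi
    have hgmemh : MemLp g 2 (AddCircle.haarAddCircle) := by
      refine hgmem2.mono_measure ?_
      rw [AddCircle.volume_eq_smul_haarAddCircle]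
      refine Measure.le_iff'.mpr fun s => ?_
      have hsmul : (ENNReal.ofReal (2 * Real.pi)
            • (AddCircle.haarAddCircle : Measure (AddCircle (2 * Real.pi)))) s
          = ENNReal.ofReal (2 * Real.pi) * AddCircle.haarAddCircle s := rfl
      rw [hsmul]
      exact le_mul_of_one_le_left zero_le
        (ENNReal.one_le_ofReal.mpr (by linarith [Real.pi_gt_three]))
    have hg0 : ∀ i : ℤ, fourierCoeff g i = 0 := by
      intro i
      rw [fourierCoeff]
      have hhaar : (AddCircle.haarAddCircle : Measure (AddCircle (2 * Real.pi)))
          = (ENNReal.ofReal (2 * Real.pi))⁻¹ • (volume : Measure (AddCircle (2 * Real.pi))) := by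
        rw [AddCircle.volume_eq_smul_haarAddCircle, smul_smul,
          ENNReal.inv_mul_cancel (by simpa using Real.two_pi_pos) ENNReal.ofReal_ne_top, one_smul]
      rw [hhaar, integral_smul_measure]
      have hmap : (∫ t, fourier (-i) t • g t
            ∂(volume : Measure (AddCircle (2 * Real.pi))))
          = ∫ x : ℝ, Complex.exp (Complex.I * (-i : ℤ) * x) * (f : ℝ → ℂ) x
            ∂(volume.restrict E) := by
        have hFm : AEStronglyMeasurable
            (fun x : ℝ => Complex.exp (Complex.I * (-i : ℤ) * x) * (f : ℝ → ℂ) x)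
            (Measure.map (psi Q) (volume : Measure (AddCircle (2 * Real.pi)))) := by
          rw [hpsi.map_eq]
          exact ((Complex.continuous_exp.comp
            (continuous_const.mul Complex.continuous_ofReal)).aestronglyMeasurable).mul
            (Lp.aestronglyMeasurable f)
        have hq := integral_map (μ := (volume : Measure (AddCircle (2 * Real.pi))))
          hpsi.measurable.aemeasurable hFm
        rw [hpsi.map_eq] at hq
        rw [hq]
        refine integral_congr_ae (Filter.Eventually.of_forall fun t => ?_)
        have hft : fourier (T := 2 * Real.pi) (-i) t
            = Complex.exp (Complex.I * (-i : ℤ) * (psi Q t)) := by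
          conv_lhs => rw [← mk_psi Q t]
          rw [fourier_coe_apply]
          congr 1
          have hpi : ((2 * Real.pi : ℝ) : ℂ) ≠ 0 := by exact_mod_cast Real.two_pi_pos.ne'
          rw [div_eq_iff hpi]
          push_cast
          ring
        show (fourier (-i)) t • g t
            = Complex.exp (Complex.I * ((-i : ℤ) : ℂ) * ((psi Q t : ℝ) : ℂ)) * (f : ℝ → ℂ) (psi Q t)
        rw [smul_eq_mul, hft]
        rfl
      rw [hmap, hfi i, smul_zero]
    have hGzero : hgmemh.toLp g = 0 := by
      have hrepr : fourierBasis.repr (hgmemh.toLp g) = 0 := by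
        refine lp.ext (funext fun i => ?_)
        rw [fourierBasis_repr]
        have : fourierCoeff ((hgmemh.toLp g : AddCircle (2 * Real.pi) → ℂ)) i
            = fourierCoeff g i := by
          rw [fourierCoeff, fourierCoeff]
          refine integral_congr_ae ?_
          filter_upwards [hgmemh.coeFn_toLp] with t ht
          rw [ht]
        rw [this, hg0 i]
        rfl
      apply fourierBasis.repr.injective
      rw [hrepr, map_zero]
    have hgae : g =ᵐ[AddCircle.haarAddCircle] (fun _ => (0 : ℂ)) := by
      refine (MemLp.toLp_eq_toLp_iff hgmemh (MemLp.zero)).mp ?_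
      rw [hGzero, MemLp.toLp_zero]
    have hgvol : g =ᵐ[volume] (fun _ => (0 : ℂ)) := by
      rw [AddCircle.volume_eq_smul_haarAddCircle]
      exact Measure.ae_smul_measure hgae _
    have h1 : (f : ℝ → ℂ) =ᵐ[volume.restrict E]
        fun x : ℝ => g ((x : AddCircle (2 * Real.pi))) := by
      filter_upwards [hpsimk] with x hx
      rw [hg]
      show (f : ℝ → ℂ) x = (f : ℝ → ℂ) (psi Q ((x : AddCircle (2 * Real.pi))))
      rw [show psi Q ((x : AddCircle (2 * Real.pi))) = x from hx]
    have h2 : (fun x : ℝ => g ((x : AddCircle (2 * Real.pi))))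
        =ᵐ[volume.restrict E] (fun _ => (0 : ℂ)) :=
      hmk.quasiMeasurePreserving.ae_eq_comp hgvol
    have hf0 : (f : ℝ → ℂ) =ᵐ[volume.restrict E] (0 : ℝ → ℂ) := h1.trans h2
    exact Lp.ext (hf0.trans (Lp.coeFn_zero ℂ 2 (volume.restrict E)).symm)
  refine ⟨HilbertBasis.mk horth hcomp, fun ℓ => ?_⟩
  have hb : (HilbertBasis.mk horth hcomp) ℓ = eL ℓ := by
    rw [HilbertBasis.coe_mk]
  rw [hb]
  exact (hmem ℓ).coeFn_toLp
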